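/- Let U be a real Hilbert space, W ⊆ U a closed subspace with orthogonal projection P_W, and M ⊆ U a nonempty subset. Let δ₀ ≥ 0 and μ ≥ 0 be constants such that for every σ ≥ 0, every w ∈ W, and all x, y with P_W x = P_W y = w, infDist(x, M) ≤ σ and infDist(y, M) ≤ σ, one has ‖x − y‖ ≤ δ₀ + 2σμ. Let N ≥ 1, let A_1, …, A_N : W → U satisfy P_W(A_k(w)) = w for all w ∈ W and all k, and let S : U → ℝ satisfy c·infDist(v, M) ≤ S(v) ≤ C·infDist(v, M) for all v ∈ U, with 0 < c ≤ C. Fix u ∈ M and set w := P_W u. Let (Ω, ℙ) be a probability space, ε ∈ [0, 1), δ > 0, and let S^Θ : Ω → (U → ℝ) be a random function such that for each k ∈ {1, …, N} the event {ω : √(1 − ε)·S(A_k(w)) ≤ S^Θ_ω(A_k(w)) ≤ √(1 + ε)·S(A_k(w))} is measurable with probability at least 1 − δ. Then with probability at least 1 − Nδ, every k* ∈ {1, …, N} minimizing k ↦ S^Θ_ω(A_k(w)) satisfies ‖u − A_{k*}(w)‖ ≤ δ₀ + 2κ^Θ μ · min_{1 ≤ k ≤ N} ‖u − A_k(w)‖,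 where κ^Θ := (C/c)·√(1 + ε)/√(1 − ε). -/

import Mathlib

open MeasureTheory

/-- Randomized multi-space oracle bound (Corollary 4.3). -/
theorem stmt_6
    {U : Type*} [NormedAddCommGroup U] [InnerProductSpace ℝ U] [CompleteSpace U]
    (W : Submodule ℝ U) [CompleteSpace W]
    (M : Set U) (hM : M.Nonempty)
    (δ₀ μ : ℝ) (hδ₀ : 0 ≤ δ₀) (hμ : 0 ≤ μ)
    (hstab : ∀ σ : ℝ, 0 ≤ σ → ∀ w : W, ∀ x y : U,
      Submodule.orthogonalProjectionOnto W x = w → Submodule.orthogonalProjectionOnto W y = w →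
      Metric.infDist x M ≤ σ → Metric.infDist y M ≤ σ →
      ‖x - y‖ ≤ δ₀ + 2 * σ * μ)
    (N : ℕ) (hN : 1 ≤ N)
    (A : Fin N → W → U)
    (hA : ∀ (k : Fin N) (w : W), Submodule.orthogonalProjectionOnto W (A k w) = w)
    (S : U → ℝ) (c C : ℝ) (hc : 0 < c) (hcC : c ≤ C)
    (hS : ∀ v : U, c * Metric.infDist v M ≤ S v ∧ S v ≤ C * Metric.infDist v M)
    (u : U) (hu : u ∈ M)
    {Ω : Type*} [MeasurableSpace Ω] (ℙ : Measure Ω) [IsProbabilityMeasure ℙ]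
    (ε δ : ℝ) (hε0 : 0 ≤ ε) (hε1 : ε < 1) (hδ : 0 < δ)
    (SΘ : Ω → U → ℝ)
    (hmeas : ∀ k : Fin N,
      MeasurableSet {ω : Ω |
        Real.sqrt (1 - ε) * S (A k (Submodule.orthogonalProjectionOnto W u)) ≤
            SΘ ω (A k (Submodule.orthogonalProjectionOnto W u)) ∧
        SΘ ω (A k (Submodule.orthogonalProjectionOnto W u)) ≤
            Real.sqrt (1 + ε) * S (A k (Submodule.orthogonalProjectionOnto W u))})
    (hprob : ∀ k : Fin N,
      ENNReal.ofReal (1 - δ) ≤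
        ℙ {ω : Ω |
          Real.sqrt (1 - ε) * S (A k (Submodule.orthogonalProjectionOnto W u)) ≤
              SΘ ω (A k (Submodule.orthogonalProjectionOnto W u)) ∧
          SΘ ω (A k (Submodule.orthogonalProjectionOnto W u)) ≤
              Real.sqrt (1 + ε) * S (A k (Submodule.orthogonalProjectionOnto W u))}) :
    ENNReal.ofReal (1 - N * δ) ≤
      ℙ {ω : Ω | ∀ kstar : Fin N,
        (∀ k : Fin N, SΘ ω (A kstar (Submodule.orthogonalProjectionOnto W u)) ≤
            SΘ ω (A k (Submodule.orthogonalProjectionOnto W u))) →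
        ‖u - A kstar (Submodule.orthogonalProjectionOnto W u)‖ ≤
          δ₀ + 2 * ((C / c) * Real.sqrt (1 + ε) / Real.sqrt (1 - ε)) * μ *
            ⨅ k : Fin N, ‖u - A k (Submodule.orthogonalProjectionOnto W u)‖} := by
  classical
  haveI : Nonempty (Fin N) := Fin.pos_iff_nonempty.mp hN
  set w : W := Submodule.orthogonalProjectionOnto W u with hw
  set E : Fin N → Set Ω := fun k => {ω : Ω |
    Real.sqrt (1 - ε) * S (A k w) ≤ SΘ ω (A k w) ∧
    SΘ ω (A k w) ≤ Real.sqrt (1 + ε) * S (A k w)} with hE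
  have hs1 : (0:ℝ) < Real.sqrt (1 - ε) := Real.sqrt_pos.mpr (by linarith)
  have hs2 : (0:ℝ) ≤ Real.sqrt (1 + ε) := Real.sqrt_nonneg _
  set κ : ℝ := (C / c) * Real.sqrt (1 + ε) / Real.sqrt (1 - ε) with hκ
  have hκ0 : 0 ≤ κ := by
    rw [hκ]
    exact div_nonneg (mul_nonneg (div_nonneg (le_trans hc.le hcC) hc.le) hs2) hs1.le
  have hEmeas : MeasurableSet (⋂ k, E k) := MeasurableSet.iInter (fun k => hmeas k)
  -- deterministic part
  have hsub : (⋂ k, E k) ⊆ {ω : Ω | ∀ kstar : Fin N,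
      (∀ k : Fin N, SΘ ω (A kstar w) ≤ SΘ ω (A k w)) →
      ‖u - A kstar w‖ ≤ δ₀ + 2 * κ * μ * ⨅ k : Fin N, ‖u - A k w‖} := by
    intro ω hω kstar hmin
    simp only [Set.mem_iInter] at hω
    set I : ℝ := ⨅ k : Fin N, ‖u - A k w‖ with hI
    have hI0 : 0 ≤ I := Real.iInf_nonneg (fun k => norm_nonneg _)
    have hd : ∀ k : Fin N, Metric.infDist (A kstar w) M ≤ κ * ‖u - A k w‖ := by
      intro k
      set d := Metric.infDist (A kstar w) M with hdd
      have hd0 : 0 ≤ d := Metric.infDist_nonneg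
      have h1 := (hS (A kstar w)).1
      have h2 := (hS (A k w)).2
      have e1 : Real.sqrt (1 - ε) * S (A kstar w) ≤ SΘ ω (A kstar w) := (hω kstar).1
      have e2 : SΘ ω (A k w) ≤ Real.sqrt (1 + ε) * S (A k w) := (hω k).2
      have hdist : Metric.infDist (A k w) M ≤ ‖u - A k w‖ := by
        calc Metric.infDist (A k w) M ≤ dist (A k w) u := Metric.infDist_le_dist_of_mem hu
        _ = ‖u - A k w‖ := by rw [dist_eq_norm, norm_sub_rev]
      have key : Real.sqrt (1 - ε) * (c * d) ≤ Real.sqrt (1 + ε) * (C * ‖u - A k w‖) := by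
        have t1 : Real.sqrt (1 - ε) * (c * d) ≤ Real.sqrt (1 - ε) * S (A kstar w) :=
          mul_le_mul_of_nonneg_left h1 hs1.le
        have t2 : Real.sqrt (1 + ε) * S (A k w) ≤ Real.sqrt (1 + ε) * (C * ‖u - A k w‖) := by
          apply mul_le_mul_of_nonneg_left _ hs2
          calc S (A k w) ≤ C * Metric.infDist (A k w) M := h2
          _ ≤ C * ‖u - A k w‖ := mul_le_mul_of_nonneg_left hdist (by linarith)
        linarith [hmin k]
      have : d ≤ (Real.sqrt (1 + ε) * (C * ‖u - A k w‖)) / (Real.sqrt (1 - ε) * c) := by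
        rw [le_div_iff₀ (by positivity)]
        nlinarith [key]
      calc d ≤ (Real.sqrt (1 + ε) * (C * ‖u - A k w‖)) / (Real.sqrt (1 - ε) * c) := this
      _ = κ * ‖u - A k w‖ := by
        rw [hκ]; field_simp
    obtain ⟨k₀, hk₀⟩ : ∃ k₀ : Fin N, ‖u - A k₀ w‖ = I := exists_eq_ciInf_of_finite
    have hdI : Metric.infDist (A kstar w) M ≤ κ * I := by
      rw [← hk₀]; exact hd k₀
    set σ : ℝ := κ * I with hσ
    have hσ0 : 0 ≤ σ := mul_nonneg hκ0 hI0
    have hustab : Metric.infDist u M ≤ σ := by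
      rw [Metric.infDist_zero_of_mem hu]; exact hσ0
    have := hstab σ hσ0 w u (A kstar w) hw.symm (hA kstar w) hustab hdI
    calc ‖u - A kstar w‖ ≤ δ₀ + 2 * σ * μ := this
    _ = δ₀ + 2 * κ * μ * I := by rw [hσ]; ring
  refine le_trans ?_ (measure_mono hsub)
  -- probability part
  by_cases hNδ : 1 - (N : ℝ) * δ ≤ 0
  · simp [ENNReal.ofReal_eq_zero.mpr hNδ]
  push_neg at hNδ
  have hδ1 : δ ≤ 1 := by
    have : (1:ℝ) ≤ N := by exact_mod_cast hN
    nlinarith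
  have hcompl : ℙ ((⋂ k, E k)ᶜ) ≤ ENNReal.ofReal ((N : ℝ) * δ) := by
    rw [Set.compl_iInter]
    calc ℙ (⋃ k, (E k)ᶜ) ≤ ∑ k : Fin N, ℙ ((E k)ᶜ) := measure_iUnion_fintype_le _ _
    _ ≤ ∑ _k : Fin N, ENNReal.ofReal δ := by
      apply Finset.sum_le_sum
      intro k _
      have hck : ℙ ((E k)ᶜ) = 1 - ℙ (E k) := prob_compl_eq_one_sub (hmeas k)
      rw [hck]
      calc 1 - ℙ (E k) ≤ 1 - ENNReal.ofReal (1 - δ) := tsub_le_tsub_left (hprob k) 1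
      _ = ENNReal.ofReal δ := by
        rw [← ENNReal.ofReal_one, ← ENNReal.ofReal_sub _ (by linarith : (0:ℝ) ≤ 1 - δ)]
        norm_num
    _ = (N : ENNReal) * ENNReal.ofReal δ := by
      rw [Finset.sum_const, Finset.card_univ, Fintype.card_fin]
      simp [nsmul_eq_mul]
    _ = ENNReal.ofReal ((N : ℝ) * δ) := by
      rw [ENNReal.ofReal_mul (Nat.cast_nonneg N), ENNReal.ofReal_natCast]
  have hfin : ℙ ((⋂ k, E k)ᶜ) ≠ ⊤ := measure_ne_top _ _
  have hadd : ℙ (⋂ k, E k) + ℙ ((⋂ k, E k)ᶜ) = 1 := prob_add_prob_compl hEmeas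
  have : ENNReal.ofReal (1 - (N : ℝ) * δ) + ℙ ((⋂ k, E k)ᶜ) ≤
      ℙ (⋂ k, E k) + ℙ ((⋂ k, E k)ᶜ) := by
    rw [hadd]
    calc ENNReal.ofReal (1 - (N : ℝ) * δ) + ℙ ((⋂ k, E k)ᶜ)
        ≤ ENNReal.ofReal (1 - (N : ℝ) * δ) + ENNReal.ofReal ((N : ℝ) * δ) :=
          add_le_add le_rfl hcompl
    _ = ENNReal.ofReal 1 := by
        rw [← ENNReal.ofReal_add (by linarith) (by positivity)]
        norm_num
    _ = 1 := ENNReal.ofReal_one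
  exact (ENNReal.add_le_add_iff_right hfin).mp this
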